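/- Let N ≥ 2 and let a_1, ..., a_N be pairwise distinct integers with |a_i| ≤ T/2 for all i, where T is a positive real. Then for each n ≤ N, ∏_{k ≠ n} |a_k|/|a_k − a_n| ≤ ((T/2)^{N−1} · 2^{N−1}) / (N−1)!. -/

import Mathlib

open Finset

lemma factorial_le_prod_two_abs : ∀ (s : Finset ℤ), 0 ∉ s →
    (s.card.factorial : ℤ) ≤ ∏ x ∈ s, 2 * |x| := by
  intro s
  induction s using Finset.strongInduction with
  | _ s ih =>
    intro h0
    rcases s.eq_empty_or_nonempty with rfl | hs
    · simp
    · obtain ⟨x, hx, hmax⟩ := s.exists_max_image (fun y => |y|) hs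
      have hx0 : x ≠ 0 := fun h => h0 (h ▸ hx)
      have hxpos : 1 ≤ |x| := Int.one_le_abs (by simpa using hx0)
      have hsub : s ⊆ (Finset.Icc (-|x|) |x|).erase 0 := by
        intro y hy
        have := hmax y hy
        simp only [Finset.mem_erase, Finset.mem_Icc]
        exact ⟨fun h => h0 (h ▸ hy), abs_le.mp this⟩
      have hcard : (s.card : ℤ) ≤ 2 * |x| := by
        have h1 := Finset.card_le_card hsub
        have h2 : ((Finset.Icc (-|x|) |x|).erase 0).card = (2 * |x|).toNat := by
          rw [Finset.card_erase_of_mem (by simp [Finset.mem_Icc]), Int.card_Icc]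
          omega
        rw [h2] at h1
        omega
      have herase : s.erase x ⊂ s := Finset.erase_ssubset hx
      have hih := ih (s.erase x) herase (fun h => h0 (Finset.mem_of_mem_erase h))
      have hcard' : (s.erase x).card = s.card - 1 := Finset.card_erase_of_mem hx
      have hprod : ∏ y ∈ s, 2 * |y| = 2 * |x| * ∏ y ∈ s.erase x, 2 * |y| :=
        (Finset.mul_prod_erase s _ hx).symm
      rw [hprod]
      have hih' : (((s.card - 1).factorial : ℕ) : ℤ) ≤ ∏ y ∈ s.erase x, 2 * |y| := by
        rwa [hcard'] at hih
      obtain ⟨c, hc⟩ : ∃ c, s.card = c + 1 := ⟨s.card - 1, by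
        have := Finset.card_pos.mpr hs; omega⟩
      have hfac : (s.card.factorial : ℤ) = (s.card : ℤ) * ((s.card - 1).factorial : ℤ) := by
        rw [hc]; push_cast [Nat.factorial_succ]; ring
      rw [hfac]
      have hnn : (0:ℤ) ≤ ((s.card - 1).factorial : ℤ) := by positivity
      calc (s.card : ℤ) * ((s.card - 1).factorial : ℤ)
          ≤ (2 * |x|) * ((s.card - 1).factorial : ℤ) :=
            mul_le_mul_of_nonneg_right hcard hnn
        _ ≤ (2 * |x|) * ∏ y ∈ s.erase x, 2 * |y| := by
            apply mul_le_mul_of_nonneg_left hih'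
            positivity

theorem prod_ratio_bound (N : ℕ) (hN : 2 ≤ N) (T : ℝ) (hT : 0 < T)
    (a : Fin N → ℤ) (ha : Function.Injective a)
    (habs : ∀ i, (|a i| : ℝ) ≤ T / 2) (n : Fin N) :
    (∏ k ∈ Finset.univ.erase n, (|a k| : ℝ) / |a k - a n|) ≤
      (T / 2) ^ (N - 1) * 2 ^ (N - 1) / ((N - 1).factorial : ℝ) := by
  push_cast
  have habs' : ∀ i, |(a i : ℝ)| ≤ T / 2 := by
    intro i; have := habs i; push_cast at this; exact this
  set E := (Finset.univ : Finset (Fin N)).erase n with hE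
  have hcardE : E.card = N - 1 := by
    rw [hE, Finset.card_erase_of_mem (Finset.mem_univ n), Finset.card_univ, Fintype.card_fin]
  set m := N - 1 with hm
  -- differences image
  set s := E.image (fun k => a k - a n) with hs
  have hinj : Set.InjOn (fun k => a k - a n) E := by
    intro x _ y _ h
    exact ha (by simpa using sub_left_injective h)
  have hscard : s.card = m := by
    rw [hs, Finset.card_image_of_injOn hinj, hcardE]
  have h0s : 0 ∉ s := by
    rw [hs]
    simp only [Finset.mem_image, not_exists]
    rintro k ⟨hk, hk0⟩
    exact absurd (ha (sub_eq_zero.mp hk0)) (Finset.ne_of_mem_erase hk)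
  have hkey : (m.factorial : ℤ) ≤ ∏ k ∈ E, 2 * |a k - a n| := by
    have := factorial_le_prod_two_abs s h0s
    rwa [hscard, hs, Finset.prod_image hinj] at this
  -- real versions
  have hB : (m.factorial : ℝ) / 2 ^ m ≤ ∏ k ∈ E, (|(a k : ℝ) - a n|) := by
    rw [div_le_iff₀ (by positivity)]
    have : ((m.factorial : ℤ) : ℝ) ≤ ((∏ k ∈ E, 2 * |a k - a n| : ℤ) : ℝ) := by
      exact_mod_cast hkey
    push_cast at this
    calc (m.factorial : ℝ) ≤ ∏ k ∈ E, 2 * |(a k : ℝ) - a n| := this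
      _ = (∏ k ∈ E, |(a k : ℝ) - a n|) * 2 ^ m := by
          rw [Finset.prod_mul_distrib, Finset.prod_const, hcardE, mul_comm]
  have hBpos : (0:ℝ) < (m.factorial : ℝ) / 2 ^ m := by positivity
  have hA : ∏ k ∈ E, |(a k : ℝ)| ≤ (T/2) ^ m := by
    calc ∏ k ∈ E, |(a k : ℝ)| ≤ ∏ k ∈ E, (T/2) :=
        Finset.prod_le_prod (fun i _ => by positivity) (fun i _ => habs' i)
      _ = (T/2) ^ m := by rw [Finset.prod_const, hcardE]
  have hsplit : (∏ k ∈ E, |(a k : ℝ)| / |(a k : ℝ) - a n|)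
      = (∏ k ∈ E, |(a k : ℝ)|) / (∏ k ∈ E, |(a k : ℝ) - a n|) :=
    Finset.prod_div_distrib _ _
  have hfinal : (∏ k ∈ E, |(a k : ℝ)|) / (∏ k ∈ E, |(a k : ℝ) - a n|)
      ≤ (T/2) ^ m / ((m.factorial : ℝ) / 2 ^ m) := by
    apply div_le_div₀ (by positivity) hA hBpos hB
  have heq : (T/2) ^ m / ((m.factorial : ℝ) / 2 ^ m)
      = (T/2) ^ m * 2 ^ m / (m.factorial : ℝ) := by
    field_simp
  calc (∏ k ∈ E, |(a k : ℝ)| / |(a k : ℝ) - a n|)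
      = (∏ k ∈ E, |(a k : ℝ)|) / (∏ k ∈ E, |(a k : ℝ) - a n|) := hsplit
    _ ≤ (T/2) ^ m / ((m.factorial : ℝ) / 2 ^ m) := hfinal
    _ = (T/2) ^ m * 2 ^ m / (m.factorial : ℝ) := heq
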